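/- Let P be the orthogonal projection onto a linear subspace V ⊆ (ℝ^N)^S and let u* minimize g over V ∩ ker C. If there exists μ₀ with Cᵀμ₀ = P(∇g(u*)), then there exists μ with Cᵀμ = P(∇g(u*)) and ‖μ‖₂ ≤ 2 σ₁^{−1/2} S^{−1/2} ‖A‖ ‖f‖₂, where σ₁ is the smallest nonzero eigenvalue of CᵀC. In particular, the bound on the Lagrange multiplier μ is independent of the subspace V. -/

import Mathlib

open Finset
open scoped RealInnerProductSpace

/-- Tuples `(u_1,…,u_S) ∈ (ℝ^N)^S`. -/
abbrev Tup (N S : ℕ) := Fin S → EuclideanSpace ℝ (Fin N)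

/-- Index set of pairs `s < s'`. -/
abbrev PairIdx (S : ℕ) := {p : Fin S × Fin S // p.1 < p.2}

/-- Elements of `(ℝ^N)^{S(S−1)/2}`, indexed by the pairs `s < s'`. -/
abbrev PTup (N S : ℕ) := PairIdx S → EuclideanSpace ℝ (Fin N)

/-- Euclidean inner product on tuples. -/
noncomputable def tinner {N S : ℕ} (x y : Tup N S) : ℝ := ∑ s, ⟪x s, y s⟫

/-- Euclidean inner product on pair-indexed tuples. -/
noncomputable def pinner {N S : ℕ} (x y : PTup N S) : ℝ := ∑ p, ⟪x p, y p⟫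

lemma key_spectral {E : Type*} [NormedAddCommGroup E] [InnerProductSpace ℝ E]
    [FiniteDimensional ℝ E]
    (T : E →ₗ[ℝ] E) (hT : T.IsSymmetric) (σ₁ : ℝ)
    (hmin : ∀ μ : ℝ, μ ≠ 0 → (∃ x : E, x ≠ 0 ∧ T x = μ • x) → σ₁ ≤ μ)
    (x : E) (hx : ∀ y, T y = 0 → ⟪x, y⟫ = 0) :
    σ₁ * ‖x‖ ^ 2 ≤ ⟪x, T x⟫ := by
  set n := Module.finrank ℝ E with hn
  have hrank : Module.finrank ℝ E = n := rfl
  set b := hT.eigenvectorBasis hrank with hb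
  set ev := hT.eigenvalues hrank with hev
  have happ : ∀ i, T (b i) = ev i • b i := fun i =>
    hT.apply_eigenvectorBasis hrank i
  have hcoef : ∀ i, ev i = 0 → ⟪x, b i⟫ = 0 := by
    intro i hi
    exact hx (b i) (by rw [happ i, hi, zero_smul])
  have hx2 : ⟪x, x⟫ = ∑ i, ⟪x, b i⟫ * ⟪b i, x⟫ := (b.sum_inner_mul_inner x x).symm
  have hTx : ⟪x, T x⟫ = ∑ i, ev i * (⟪x, b i⟫ * ⟪b i, x⟫) := by
    rw [← b.sum_inner_mul_inner x (T x)]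
    congr 1; ext i
    have : ⟪b i, T x⟫ = ev i * ⟪b i, x⟫ := by
      rw [← hT (b i) x, happ i, real_inner_smul_left]
    rw [this]; ring
  have hsym : ∀ i, ⟪b i, x⟫ = ⟪x, b i⟫ := fun i => real_inner_comm _ _
  have hnorm : ‖x‖ ^ 2 = ∑ i, ⟪x, b i⟫ ^ 2 := by
    rw [← real_inner_self_eq_norm_sq, hx2]
    congr 1; ext i; rw [hsym i]; ring
  rw [hnorm, hTx, Finset.mul_sum]
  apply Finset.sum_le_sum
  intro i _
  rw [hsym i]
  by_cases hev0 : ev i = 0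
  · rw [hcoef i hev0]; simp
  · have h1 : σ₁ ≤ ev i := hmin (ev i) hev0 ⟨b i, b.toBasis.ne_zero i, happ i⟩
    have : 0 ≤ ⟪x, b i⟫ * ⟪x, b i⟫ := mul_self_nonneg _
    nlinarith

lemma arith_combine (σ a B nx : ℝ) (hσ : 0 < σ) (ha : 0 ≤ a) (hB : 0 ≤ B) (hnx : 0 ≤ nx)
    (h1 : a ^ 2 ≤ nx * B) (h2 : σ * nx ^ 2 ≤ a ^ 2) : a ≤ B / Real.sqrt σ := by
  set r := Real.sqrt σ with hr
  have hrpos : 0 < r := Real.sqrt_pos.mpr hσ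
  have hr2 : r ^ 2 = σ := Real.sq_sqrt hσ.le
  have hxa : r * nx ≤ a := by nlinarith [sq_nonneg (r * nx - a)]
  rcases eq_or_lt_of_le ha with h0 | h0
  · rw [← h0]; positivity
  · rw [le_div_iff₀ hrpos]; nlinarith

lemma arith_pg (B G : ℝ) (hB : 0 ≤ B) (hG : 0 ≤ G) (h1 : B ^ 2 ≤ G * B) : B ≤ G := by
  rcases eq_or_lt_of_le hB with h0 | h0
  · rw [← h0]; exact hG
  · nlinarith

section Transfer

variable {N S : ℕ}

/-- `Tup` with the `L²` structure. -/
noncomputable def toE (N S : ℕ) :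
    Tup N S ≃ₗ[ℝ] PiLp 2 (fun _ : Fin S => EuclideanSpace ℝ (Fin N)) :=
  (WithLp.linearEquiv 2 ℝ _).symm

/-- `PTup` with the `L²` structure. -/
noncomputable def toF (N S : ℕ) :
    PTup N S ≃ₗ[ℝ] PiLp 2 (fun _ : PairIdx S => EuclideanSpace ℝ (Fin N)) :=
  (WithLp.linearEquiv 2 ℝ _).symm

lemma tinner_eq (x y : Tup N S) : tinner x y = ⟪toE N S x, toE N S y⟫ := by
  rw [PiLp.inner_apply]; rfl

lemma pinner_eq (x y : PTup N S) : pinner x y = ⟪toF N S x, toF N S y⟫ := by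
  rw [PiLp.inner_apply]; rfl

end Transfer

set_option maxHeartbeats 1000000 in
theorem lagrange_multiplier_bound (N m S : ℕ) (hN : 1 ≤ N) (hm : 1 ≤ m) (hS : 2 ≤ S)
    (A : EuclideanSpace ℝ (Fin N) →L[ℝ] EuclideanSpace ℝ (Fin m))
    (f : EuclideanSpace ℝ (Fin m))
    (c : Fin S → Fin S → ℝ) (hc : ∀ s s', 0 ≤ c s s')
    (hcnz : ∃ p : PairIdx S, c (p : Fin S × Fin S).1 (p : Fin S × Fin S).2 ≠ 0)
    (C : Tup N S →ₗ[ℝ] PTup N S)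
    (hC : ∀ (u : Tup N S) (p : PairIdx S),
      C u p = Real.sqrt (c (p : Fin S × Fin S).1 (p : Fin S × Fin S).2) •
        (u (p : Fin S × Fin S).1 - u (p : Fin S × Fin S).2))
    (Ct : PTup N S →ₗ[ℝ] Tup N S)
    (hCt : ∀ (x : Tup N S) (y : PTup N S), pinner (C x) y = tinner x (Ct y))
    (σ₁ : ℝ) (hσnz : σ₁ ≠ 0)
    (hσeig : ∃ x : Tup N S, x ≠ 0 ∧ Ct (C x) = σ₁ • x)
    (hσmin : ∀ μ : ℝ, μ ≠ 0 → (∃ x : Tup N S, x ≠ 0 ∧ Ct (C x) = μ • x) → σ₁ ≤ μ)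
    (V : Submodule ℝ (Tup N S))
    (P : Tup N S →ₗ[ℝ] Tup N S)
    (hPrange : ∀ x, P x ∈ V)
    (hPfix : ∀ v ∈ V, P v = v)
    (hPorth : ∀ x, ∀ v ∈ V, tinner (x - P x) v = 0)
    (ustar : Tup N S) (hmemV : ustar ∈ V) (hfeas : C ustar = 0)
    (hmin : ∀ v ∈ V, C v = 0 →
      (∑ s, (1 / (S : ℝ)) * ‖A (ustar s) - f‖ ^ 2) ≤
        ∑ s, (1 / (S : ℝ)) * ‖A (v s) - f‖ ^ 2)
    (grad : Tup N S)
    (hgrad : grad = fun s => ((2 : ℝ) / (S : ℝ)) •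
      (ContinuousLinearMap.adjoint A) (A (ustar s) - f))
    (μ₀ : PTup N S) (hμ₀ : Ct μ₀ = P grad) :
    ∃ μ : PTup N S, Ct μ = P grad ∧
      Real.sqrt (pinner μ μ) ≤
        2 * ‖A‖ * ‖f‖ / (Real.sqrt σ₁ * Real.sqrt (S : ℝ)) := by
  classical
  set eE := toE N S with heE
  set eF := toF N S with heF
  set CE := (eF.toLinearMap ∘ₗ C) ∘ₗ eE.symm.toLinearMap with hCE
  set CtE := (eE.toLinearMap ∘ₗ Ct) ∘ₗ eF.symm.toLinearMap with hCtE
  set T := CtE ∘ₗ CE with hTdef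
  have hadj : ∀ x y, ⟪CE x, y⟫ = ⟪x, CtE y⟫ := by
    intro x y
    have := hCt (eE.symm x) (eF.symm y)
    rw [tinner_eq, pinner_eq] at this
    simpa [hCE, hCtE, heE, heF] using this
  have hadj' : ∀ y x, ⟪CtE y, x⟫ = ⟪y, CE x⟫ := by
    intro y x
    rw [real_inner_comm, ← hadj, real_inner_comm]
  have hTapp : ∀ x, T x = eE (Ct (C (eE.symm x))) := by
    intro x; simp [hTdef, hCE, hCtE]
  have hTsymm : T.IsSymmetric := by
    intro x y
    exact (hadj' (CE x) y).trans (hadj x (CE y))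
  have hTmin : ∀ μ : ℝ, μ ≠ 0 →
      (∃ x : PiLp 2 (fun _ : Fin S => EuclideanSpace ℝ (Fin N)), x ≠ 0 ∧ T x = μ • x) →
      σ₁ ≤ μ := by
    intro μ hμ ⟨x, hx0, hx⟩
    refine hσmin μ hμ ⟨eE.symm x, by simpa using hx0, ?_⟩
    have h1 : eE (Ct (C (eE.symm x))) = μ • x := by rw [← hTapp]; exact hx
    have := congrArg eE.symm h1
    simpa [map_smul] using this
  have hinnerT : ∀ x, ⟪x, T x⟫ = ⟪CE x, CE x⟫ := fun x => (hadj x (CE x)).symm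
  have hσpos : 0 < σ₁ := by
    obtain ⟨x, hx0, hx⟩ := hσeig
    have hx' : T (eE x) = σ₁ • eE x := by
      rw [hTapp]; simp [hx, map_smul]
    have h1 : 0 ≤ ⟪eE x, T (eE x)⟫ := by
      rw [hinnerT]; exact real_inner_self_nonneg
    rw [hx', real_inner_smul_right, real_inner_self_eq_norm_sq] at h1
    have hxn : (0:ℝ) < ‖eE x‖ ^ 2 := by
      have hne : eE x ≠ 0 := by simpa using hx0
      exact pow_pos (norm_pos_iff.mpr hne) 2
    have hge : 0 ≤ σ₁ := by nlinarith
    exact lt_of_le_of_ne hge (Ne.symm hσnz)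
  -- decompose μ₀ to get z with T z = eE (P grad)
  obtain ⟨y, hy, w, hw, hsum⟩ :=
    (LinearMap.range CE).exists_add_mem_mem_orthogonal (eF μ₀)
  obtain ⟨z, hz⟩ := hy
  have hCtw : CtE w = 0 := by
    have h0 : ∀ v, ⟪v, CtE w⟫ = 0 := by
      intro v
      rw [← hadj v w]
      exact (Submodule.mem_orthogonal _ w).mp hw (CE v) ⟨v, rfl⟩
    exact inner_self_eq_zero.mp (h0 (CtE w))
  have hTz : T z = eE (P grad) := by
    have h1 : CtE (eF μ₀) = eE (P grad) := by
      show eE (Ct (eF.symm (eF μ₀))) = eE (P grad)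
      rw [eF.symm_apply_apply, hμ₀]
    have h2 : CtE (eF μ₀) = T z + CtE w := by
      rw [hsum, ← hz, map_add]; rfl
    rw [h1, hCtw, add_zero] at h2
    exact h2.symm
  -- project z away from ker T
  obtain ⟨k, hk, x, hxmem, hzsum⟩ :=
    (LinearMap.ker T).exists_add_mem_mem_orthogonal z
  have hTx : T x = eE (P grad) := by
    rw [← hTz, hzsum, map_add, LinearMap.mem_ker.mp hk, zero_add]
  have hxorth : ∀ y, T y = 0 → ⟪x, y⟫ = 0 := by
    intro y hy0
    rw [real_inner_comm]
    exact (Submodule.mem_orthogonal _ x).mp hxmem y (LinearMap.mem_ker.mpr hy0)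
  refine ⟨eF.symm (CE x), ?_, ?_⟩
  · have h1 : Ct (eF.symm (CE x)) = eE.symm (CtE (CE x)) := by
      show Ct (eF.symm (CE x)) = eE.symm (eE (Ct (eF.symm (CE x))))
      rw [eE.symm_apply_apply]
    rw [h1]
    have h2 : CtE (CE x) = eE (P grad) := hTx
    rw [h2, eE.symm_apply_apply]
  -- the bound
  have ha2 : ‖CE x‖ ^ 2 = ⟪x, T x⟫ := by
    rw [hinnerT, real_inner_self_eq_norm_sq]
  have haB : ‖CE x‖ ^ 2 ≤ ‖x‖ * ‖eE (P grad)‖ := by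
    rw [ha2, hTx]
    exact real_inner_le_norm x _
  have hkey : σ₁ * ‖x‖ ^ 2 ≤ ‖CE x‖ ^ 2 := by
    rw [ha2]
    exact key_spectral T hTsymm σ₁ hTmin x hxorth
  -- ‖P grad‖ ≤ ‖grad‖
  have hBG : ‖eE (P grad)‖ ≤ ‖eE grad‖ := by
    have horth : ⟪eE grad - eE (P grad), eE (P grad)⟫ = 0 := by
      have h := hPorth grad (P grad) (hPrange grad)
      rw [tinner_eq, map_sub] at h
      exact h
    have h1 : ‖eE (P grad)‖ ^ 2 = ⟪eE grad, eE (P grad)⟫ := by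
      have h2 : ⟪eE grad, eE (P grad)⟫
          = ⟪eE (P grad), eE (P grad)⟫ + ⟪eE grad - eE (P grad), eE (P grad)⟫ := by
        rw [← inner_add_left]
        congr 1
        abel
      rw [h2, horth, add_zero, real_inner_self_eq_norm_sq]
    refine arith_pg _ _ (norm_nonneg _) (norm_nonneg _) ?_
    rw [h1]
    exact real_inner_le_norm _ _
  -- bound on ‖eE grad‖
  have hSpos : (0:ℝ) < S := by positivity
  have hsum0 : (∑ s, ‖A (ustar s) - f‖ ^ 2) ≤ S * ‖f‖ ^ 2 := by
    have h0 := hmin 0 (Submodule.zero_mem V) (map_zero C)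
    simp only [Pi.zero_apply, map_zero, zero_sub, norm_neg] at h0
    rw [Finset.sum_const, card_univ, Fintype.card_fin, ← Finset.mul_sum,
      nsmul_eq_mul] at h0
    have h1 := mul_le_mul_of_nonneg_left h0 hSpos.le
    have hS0 : (S:ℝ) ≠ 0 := ne_of_gt hSpos
    calc (∑ s, ‖A (ustar s) - f‖ ^ 2)
        = S * ((1 / (S:ℝ)) * ∑ s, ‖A (ustar s) - f‖ ^ 2) := by field_simp
      _ ≤ S * ((S:ℝ) * ((1 / (S:ℝ)) * ‖f‖ ^ 2)) := h1
      _ = S * ‖f‖ ^ 2 := by field_simp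
  have hGbound : ‖eE grad‖ ≤ 2 * ‖A‖ * ‖f‖ / Real.sqrt S := by
    have hAdj : ‖ContinuousLinearMap.adjoint A‖ = ‖A‖ :=
      LinearIsometryEquiv.norm_map ContinuousLinearMap.adjoint A
    have hGsq : ‖eE grad‖ ^ 2 = ∑ s, ‖grad s‖ ^ 2 := by
      rw [← real_inner_self_eq_norm_sq, ← tinner_eq]
      unfold tinner
      exact Finset.sum_congr rfl fun s _ => real_inner_self_eq_norm_sq _
    have hterm : ∀ s, ‖grad s‖ ^ 2 ≤ (2 / (S:ℝ)) ^ 2 * ‖A‖ ^ 2 * ‖A (ustar s) - f‖ ^ 2 := by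
      intro s
      rw [hgrad]
      simp only [norm_smul, Real.norm_eq_abs]
      have h1 : ‖(ContinuousLinearMap.adjoint A) (A (ustar s) - f)‖
          ≤ ‖A‖ * ‖A (ustar s) - f‖ := by
        rw [← hAdj]; exact ContinuousLinearMap.le_opNorm _ _
      have h2 : |(2:ℝ) / S| = 2 / S := abs_of_nonneg (by positivity)
      rw [h2, mul_pow]
      have h3 : (0:ℝ) ≤ (2 / (S:ℝ)) ^ 2 := sq_nonneg _
      have h4 : ‖(ContinuousLinearMap.adjoint A) (A (ustar s) - f)‖ ^ 2
          ≤ (‖A‖ * ‖A (ustar s) - f‖) ^ 2 := by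
        apply pow_le_pow_left₀ (norm_nonneg _) h1
      nlinarith
    have hG2 : ‖eE grad‖ ^ 2 ≤ (2 * ‖A‖ * ‖f‖ / Real.sqrt S) ^ 2 := by
      rw [hGsq]
      calc (∑ s, ‖grad s‖ ^ 2)
          ≤ ∑ s, (2 / (S:ℝ)) ^ 2 * ‖A‖ ^ 2 * ‖A (ustar s) - f‖ ^ 2 :=
            Finset.sum_le_sum fun s _ => hterm s
        _ = (2 / (S:ℝ)) ^ 2 * ‖A‖ ^ 2 * ∑ s, ‖A (ustar s) - f‖ ^ 2 := by
            rw [Finset.mul_sum]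
        _ ≤ (2 / (S:ℝ)) ^ 2 * ‖A‖ ^ 2 * (S * ‖f‖ ^ 2) := by
            apply mul_le_mul_of_nonneg_left hsum0 (by positivity)
        _ = (2 * ‖A‖ * ‖f‖ / Real.sqrt S) ^ 2 := by
            rw [div_pow, div_pow, Real.sq_sqrt hSpos.le]
            field_simp
    have hrhs : (0:ℝ) ≤ 2 * ‖A‖ * ‖f‖ / Real.sqrt S := by positivity
    nlinarith [norm_nonneg (eE grad)]
  -- combine
  have hfinal : ‖CE x‖ ≤ ‖eE (P grad)‖ / Real.sqrt σ₁ :=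
    arith_combine σ₁ _ _ _ hσpos (norm_nonneg _) (norm_nonneg _) (norm_nonneg _) haB hkey
  have hgoal : Real.sqrt (pinner (eF.symm (CE x)) (eF.symm (CE x))) = ‖CE x‖ := by
    rw [pinner_eq]
    show Real.sqrt ⟪eF (eF.symm (CE x)), eF (eF.symm (CE x))⟫ = _
    rw [eF.apply_symm_apply, real_inner_self_eq_norm_sq, Real.sqrt_sq (norm_nonneg _)]
  rw [hgoal]
  have hrpos : 0 < Real.sqrt σ₁ := Real.sqrt_pos.mpr hσpos
  calc ‖CE x‖ ≤ ‖eE (P grad)‖ / Real.sqrt σ₁ := hfinal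
    _ ≤ (2 * ‖A‖ * ‖f‖ / Real.sqrt S) / Real.sqrt σ₁ :=
        div_le_div_of_nonneg_right (hBG.trans hGbound) hrpos.le
    _ = 2 * ‖A‖ * ‖f‖ / (Real.sqrt σ₁ * Real.sqrt S) := by
        rw [div_div]; ring_nf
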